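/- Let f : ℝⁿ → ℝ be continuously differentiable with L-Lipschitz gradient (with respect to the Euclidean norm), let μ > 0, and define the Gaussian smoothing f_μ(x) = (2π)^{−n/2} ∫_{ℝⁿ} f(x + μv) e^{−‖v‖²/2} dv. Then for every x ∈ ℝⁿ, |f_μ(x) − f(x)| ≤ (μ²/2)·L·n. -/

import Mathlib

open MeasureTheory Real Set

local notation "⟪" x ", " y "⟫" => @inner ℝ _ _ x y

/-- 1D Gaussian integrability. -/
lemma gs_g_int : Integrable (fun t : ℝ => Real.exp (-t ^ 2 / 2)) := by
  have := integrable_exp_neg_mul_sq (b := (1/2 : ℝ)) (by norm_num)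
  convert this using 2 with t
  ring_nf

lemma gs_g2_int : Integrable (fun t : ℝ => t ^ 2 * Real.exp (-t ^ 2 / 2)) := by
  have := integrable_rpow_mul_exp_neg_mul_sq (b := (1/2 : ℝ)) (by norm_num) (s := 2) (by norm_num)
  convert this using 2 with t
  rw [show ((2:ℝ) = ((2:ℕ):ℝ)) by norm_num, Real.rpow_natCast]
  ring_nf

/-- integration by parts on `Ioi 0`. -/
lemma gs_ioi_eq : ∫ t in Ioi (0:ℝ), (t ^ 2 * Real.exp (-t ^ 2 / 2) - Real.exp (-t ^ 2 / 2)) = 0 := by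
  have hderiv : ∀ t ∈ Ioi (0:ℝ), HasDerivAt (fun t : ℝ => -(t * Real.exp (-t ^ 2 / 2)))
      (t ^ 2 * Real.exp (-t ^ 2 / 2) - Real.exp (-t ^ 2 / 2)) t := by
    intro t _
    have h1 : HasDerivAt (fun t : ℝ => -t ^ 2 / 2) (-t) t := by
      have := ((hasDerivAt_pow 2 t).neg.div_const 2)
      refine this.congr_deriv ?_
      push_cast
      ring
    have h2 : HasDerivAt (fun t : ℝ => Real.exp (-t ^ 2 / 2))
        (Real.exp (-t ^ 2 / 2) * (-t)) t := h1.exp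
    have h3 := ((hasDerivAt_id t).mul h2).neg
    refine h3.congr_deriv ?_
    simp only [id_eq, one_mul]
    ring
  have hcont : ContinuousWithinAt (fun t : ℝ => -(t * Real.exp (-t ^ 2 / 2))) (Ici 0) 0 := by
    apply Continuous.continuousWithinAt
    continuity
  have hint : IntegrableOn (fun t : ℝ =>
      t ^ 2 * Real.exp (-t ^ 2 / 2) - Real.exp (-t ^ 2 / 2)) (Ioi 0) :=
    (gs_g2_int.sub gs_g_int).integrableOn
  have htend : Filter.Tendsto (fun t : ℝ => -(t * Real.exp (-t ^ 2 / 2)))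
      Filter.atTop (nhds 0) := by
    rw [show (0:ℝ) = -0 by norm_num]
    apply Filter.Tendsto.neg
    have hlo := rpow_mul_exp_neg_mul_sq_isLittleO_exp_neg (b := (1/2:ℝ)) (by norm_num) 1
    have h0 : Filter.Tendsto (fun x : ℝ => Real.exp (-(1/2) * x)) Filter.atTop (nhds 0) := by
      have : Filter.Tendsto (fun x : ℝ => -(1/2) * x) Filter.atTop Filter.atBot := by
        apply Filter.tendsto_id.const_mul_atTop_of_neg (by norm_num)
      exact Real.tendsto_exp_atBot.comp this
    have := hlo.isBigO.trans_tendsto h0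
    refine this.congr' ?_
    filter_upwards [Filter.eventually_ge_atTop (0:ℝ)] with t ht
    rw [Real.rpow_one]
    congr 1
    ring
  have := integral_Ioi_of_hasDerivAt_of_tendsto hcont hderiv hint htend
  simpa using this

lemma gs_g2_eq_g : ∫ t : ℝ, t ^ 2 * Real.exp (-t ^ 2 / 2) = ∫ t : ℝ, Real.exp (-t ^ 2 / 2) := by
  have key : ∀ (h : ℝ → ℝ), Integrable h → (∀ t, h (-t) = h t) →
      ∫ t : ℝ, h t = 2 * ∫ t in Ioi (0:ℝ), h t := by
    intro h hint heven
    rw [← intervalIntegral.integral_Iic_add_Ioi (b := (0:ℝ)) hint.integrableOn hint.integrableOn]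
    have : ∫ t in Iic (0:ℝ), h t = ∫ t in Ioi (0:ℝ), h t := by
      rw [show (0:ℝ) = -0 by norm_num, ← integral_comp_neg_Ioi]
      simp only [heven, neg_zero]
    rw [this]; ring
  rw [key _ gs_g2_int (fun t => by ring_nf), key _ gs_g_int (fun t => by ring_nf)]
  have hsub := integral_sub (gs_g2_int.integrableOn (s := Ioi (0:ℝ)))
    (gs_g_int.integrableOn (s := Ioi (0:ℝ)))
  have h0 := gs_ioi_eq
  rw [hsub] at h0
  have : ∫ t in Ioi (0:ℝ), t ^ 2 * Real.exp (-t ^ 2 / 2) = ∫ t in Ioi (0:ℝ), Real.exp (-t ^ 2 / 2) := by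
    linarith
  rw [this]

variable {n : ℕ}

lemma gs_norm_sq (v : EuclideanSpace ℝ (Fin n)) : ‖v‖ ^ 2 = ∑ i, v i ^ 2 := by
  rw [EuclideanSpace.norm_eq, Real.sq_sqrt (by positivity)]
  simp [sq_abs]

lemma gs_M1 : Integrable (fun v : EuclideanSpace ℝ (Fin n) => Real.exp (-‖v‖ ^ 2 / 2)) := by
  rw [← MeasurePreserving.integrable_comp_emb
    (EuclideanSpace.volume_preserving_symm_measurableEquiv_toLp (Fin n)).symm
    (MeasurableEquiv.measurableEmbedding _)]
  have : ∀ x : Fin n → ℝ,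
      Real.exp (-‖(MeasurableEquiv.toLp 2 (Fin n → ℝ)) x‖ ^ 2 / 2)
      = ∏ i, Real.exp (-(x i) ^ 2 / 2) := by
    intro x
    rw [gs_norm_sq, ← Real.exp_sum]
    congr 1
    rw [← Finset.sum_div, ← Finset.sum_neg_distrib]
    rfl
  simp only [Function.comp_def, MeasurableEquiv.symm_symm, this]
  exact Integrable.fintype_prod (fun i => gs_g_int)

lemma gs_M2 : Integrable (fun v : EuclideanSpace ℝ (Fin n) => ‖v‖ ^ 2 * Real.exp (-‖v‖ ^ 2 / 2)) := by
  rw [← MeasurePreserving.integrable_comp_emb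
    (EuclideanSpace.volume_preserving_symm_measurableEquiv_toLp (Fin n)).symm
    (MeasurableEquiv.measurableEmbedding _)]
  have : ∀ x : Fin n → ℝ,
      ‖(MeasurableEquiv.toLp 2 (Fin n → ℝ)) x‖ ^ 2 *
        Real.exp (-‖(MeasurableEquiv.toLp 2 (Fin n → ℝ)) x‖ ^ 2 / 2)
      = ∑ i, ∏ j, (if j = i then (x j) ^ 2 * Real.exp (-(x j) ^ 2 / 2)
          else Real.exp (-(x j) ^ 2 / 2)) := by
    intro x
    have hcoord : ∀ i, (MeasurableEquiv.toLp 2 (Fin n → ℝ)) x i = x i := fun i => rfl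
    have hprod : ∀ i : Fin n, ∏ j, (if j = i then (x j) ^ 2 * Real.exp (-(x j) ^ 2 / 2)
        else Real.exp (-(x j) ^ 2 / 2))
        = (x i) ^ 2 * ∏ j, Real.exp (-(x j) ^ 2 / 2) := by
      intro i
      rw [show (fun j => (if j = i then (x j) ^ 2 * Real.exp (-(x j) ^ 2 / 2)
          else Real.exp (-(x j) ^ 2 / 2)))
        = fun j => (if j = i then (x j) ^ 2 else 1) * Real.exp (-(x j) ^ 2 / 2) from by
          funext j; split <;> simp]
      rw [Finset.prod_mul_distrib, Finset.prod_ite_eq']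
      simp
    rw [gs_norm_sq]
    simp only [hcoord, hprod, ← Finset.sum_mul]
    congr 1
    rw [← Real.exp_sum]
    congr 1
    rw [← Finset.sum_div, ← Finset.sum_neg_distrib]
  simp only [Function.comp_def, MeasurableEquiv.symm_symm, this]
  apply integrable_finset_sum
  intro i _
  apply Integrable.fintype_prod (f := fun j t => if j = i then t ^ 2 * Real.exp (-t ^ 2 / 2)
    else Real.exp (-t ^ 2 / 2))
  intro j
  split
  · exact gs_g2_int
  · exact gs_g_int

lemma gs_M3 : ∫ v : EuclideanSpace ℝ (Fin n), ‖v‖ ^ 2 * Real.exp (-‖v‖ ^ 2 / 2)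
    = n * ∫ v : EuclideanSpace ℝ (Fin n), Real.exp (-‖v‖ ^ 2 / 2) := by
  rw [← MeasurePreserving.integral_comp
      (EuclideanSpace.volume_preserving_symm_measurableEquiv_toLp (Fin n)).symm
      (MeasurableEquiv.measurableEmbedding _),
    ← MeasurePreserving.integral_comp
      (EuclideanSpace.volume_preserving_symm_measurableEquiv_toLp (Fin n)).symm
      (MeasurableEquiv.measurableEmbedding _)]
  have hexp : ∀ x : Fin n → ℝ,
      Real.exp (-‖(MeasurableEquiv.toLp 2 (Fin n → ℝ)) x‖ ^ 2 / 2)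
      = ∏ i, Real.exp (-(x i) ^ 2 / 2) := by
    intro x
    rw [gs_norm_sq, ← Real.exp_sum]
    congr 1
    rw [← Finset.sum_div, ← Finset.sum_neg_distrib]
    rfl
  have hsq : ∀ x : Fin n → ℝ,
      ‖(MeasurableEquiv.toLp 2 (Fin n → ℝ)) x‖ ^ 2 *
        Real.exp (-‖(MeasurableEquiv.toLp 2 (Fin n → ℝ)) x‖ ^ 2 / 2)
      = ∑ i, ∏ j, (if j = i then (x j) ^ 2 * Real.exp (-(x j) ^ 2 / 2)
          else Real.exp (-(x j) ^ 2 / 2)) := by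
    intro x
    have hprod : ∀ i : Fin n, ∏ j, (if j = i then (x j) ^ 2 * Real.exp (-(x j) ^ 2 / 2)
        else Real.exp (-(x j) ^ 2 / 2))
        = (x i) ^ 2 * ∏ j, Real.exp (-(x j) ^ 2 / 2) := by
      intro i
      rw [show (fun j => (if j = i then (x j) ^ 2 * Real.exp (-(x j) ^ 2 / 2)
          else Real.exp (-(x j) ^ 2 / 2)))
        = fun j => (if j = i then (x j) ^ 2 else 1) * Real.exp (-(x j) ^ 2 / 2) from by
          funext j; split <;> simp]
      rw [Finset.prod_mul_distrib, Finset.prod_ite_eq']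
      simp
    rw [hexp, gs_norm_sq]
    have hcoord : ∀ i, (MeasurableEquiv.toLp 2 (Fin n → ℝ)) x i = x i := fun i => rfl
    simp only [hcoord, Finset.sum_mul, hprod]
  simp only [MeasurableEquiv.symm_symm]
  rw [show (fun x : Fin n → ℝ => ‖(MeasurableEquiv.toLp 2 (Fin n → ℝ)) x‖ ^ 2 *
        Real.exp (-‖(MeasurableEquiv.toLp 2 (Fin n → ℝ)) x‖ ^ 2 / 2)) = fun x =>
        ∑ i, ∏ j, (if j = i then (x j) ^ 2 * Real.exp (-(x j) ^ 2 / 2)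
          else Real.exp (-(x j) ^ 2 / 2)) from funext hsq,
    show (fun x : Fin n → ℝ => Real.exp
        (-‖(MeasurableEquiv.toLp 2 (Fin n → ℝ)) x‖ ^ 2 / 2)) = fun x =>
        ∏ i, Real.exp (-(x i) ^ 2 / 2) from funext hexp]
  rw [integral_finset_sum (μ := volume) _ (fun i _ => Integrable.fintype_prod
    (f := fun j t => if j = i then t ^ 2 * Real.exp (-t ^ 2 / 2) else Real.exp (-t ^ 2 / 2))
    (fun j => by dsimp only; split; exacts [gs_g2_int, gs_g_int]))]
  rw [integral_fintype_prod_volume_eq_pow (ι := Fin n) (fun t : ℝ => Real.exp (-t ^ 2 / 2))]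
  have : ∀ i : Fin n, ∫ x : Fin n → ℝ, ∏ j, (if j = i then (x j) ^ 2 * Real.exp (-(x j) ^ 2 / 2)
      else Real.exp (-(x j) ^ 2 / 2))
      = (∫ t : ℝ, Real.exp (-t ^ 2 / 2)) ^ n := by
    intro i
    rw [integral_fintype_prod_volume_eq_prod (ι := Fin n)
      (f := fun j t => if j = i then t ^ 2 * Real.exp (-t ^ 2 / 2) else Real.exp (-t ^ 2 / 2))]
    have : ∀ j : Fin n, (∫ t : ℝ, if j = i then t ^ 2 * Real.exp (-t ^ 2 / 2)
        else Real.exp (-t ^ 2 / 2)) = ∫ t : ℝ, Real.exp (-t ^ 2 / 2) := by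
      intro j
      split
      · exact gs_g2_eq_g
      · rfl
    simp only [this, Finset.prod_const, Finset.card_univ, Fintype.card_fin]
  simp only [this, Finset.sum_const, Finset.card_univ, Fintype.card_fin, nsmul_eq_mul,
    Fintype.card_fin]

lemma gs_M0 : ∫ v : EuclideanSpace ℝ (Fin n), Real.exp (-‖v‖ ^ 2 / 2)
    = (2 * Real.pi) ^ ((n : ℝ) / 2) := by
  have := GaussianFourier.integral_rexp_neg_mul_sq_norm
    (V := EuclideanSpace ℝ (Fin n)) (b := (1/2 : ℝ)) (by norm_num)
  rw [finrank_euclideanSpace_fin] at this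
  rw [show (π / (1/2 : ℝ)) = 2 * π from by ring] at this
  rw [← this]
  congr 1 with v
  congr 1
  ring

lemma gs_taylor {n : ℕ} (f : EuclideanSpace ℝ (Fin n) → ℝ)
    (f' : EuclideanSpace ℝ (Fin n) → EuclideanSpace ℝ (Fin n))
    (hf' : ∀ x, HasGradientAt f (f' x) x)
    (L : ℝ) (hL : 0 < L)
    (hLip : ∀ x y, ‖f' y - f' x‖ ≤ L * ‖y - x‖)
    (x y : EuclideanSpace ℝ (Fin n)) :
    |f y - f x - ⟪f' x, y - x⟫| ≤ L / 2 * ‖y - x‖ ^ 2 := by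
  have hfc' : Continuous f' := by
    have : LipschitzWith (Real.toNNReal L) f' := by
      apply LipschitzWith.of_dist_le_mul
      intro a b
      rw [dist_eq_norm, dist_eq_norm, Real.coe_toNNReal _ hL.le]
      exact hLip b a
    exact this.continuous
  have hline : ∀ t : ℝ, HasDerivAt (fun t : ℝ => x + t • (y - x)) (y - x) t := by
    intro t
    have := ((hasDerivAt_id t).smul_const (y - x)).const_add x
    simpa using this
  have hg : ∀ t : ℝ, HasDerivAt (fun t : ℝ => f (x + t • (y - x)))
      ⟪f' (x + t • (y - x)), y - x⟫ t := by
    intro t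
    have h1 := (hf' (x + t • (y - x))).hasFDerivAt.comp_hasDerivAt t (hline t)
    exact h1
  have hcontd : Continuous fun t : ℝ => ⟪f' (x + t • (y - x)), y - x⟫ := by
    apply Continuous.inner
    · exact hfc'.comp (by continuity)
    · exact continuous_const
  have hFTC : ∫ t in (0:ℝ)..1, ⟪f' (x + t • (y - x)), y - x⟫ = f y - f x := by
    rw [intervalIntegral.integral_eq_sub_of_hasDerivAt (fun t _ => hg t)
      (hcontd.intervalIntegrable _ _)]
    norm_num
  have hsplit : f y - f x - ⟪f' x, y - x⟫
      = ∫ t in (0:ℝ)..1, (⟪f' (x + t • (y - x)), y - x⟫ - ⟪f' x, y - x⟫) := by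
    rw [intervalIntegral.integral_sub (hcontd.intervalIntegrable _ _)
      (intervalIntegrable_const), hFTC, intervalIntegral.integral_const]
    norm_num
  rw [hsplit]
  have hb : ∀ᵐ t ∂(volume : Measure ℝ), t ∈ Set.uIoc (0:ℝ) 1 →
      ‖⟪f' (x + t • (y - x)), y - x⟫ - ⟪f' x, y - x⟫‖ ≤ L * ‖y - x‖ ^ 2 * t := by
    apply Filter.Eventually.of_forall
    intro t ht
    rw [Set.uIoc_of_le (by norm_num : (0:ℝ) ≤ 1)] at ht
    have ht0 : 0 < t := ht.1
    rw [← inner_sub_left]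
    calc ‖⟪f' (x + t • (y - x)) - f' x, y - x⟫‖
        ≤ ‖f' (x + t • (y - x)) - f' x‖ * ‖y - x‖ := norm_inner_le_norm _ _
      _ ≤ (L * ‖(x + t • (y - x)) - x‖) * ‖y - x‖ := by
          apply mul_le_mul_of_nonneg_right _ (norm_nonneg _)
          exact hLip x (x + t • (y - x))
      _ = L * ‖y - x‖ ^ 2 * t := by
          rw [add_sub_cancel_left, norm_smul, Real.norm_eq_abs, abs_of_pos ht0]
          ring
  have := intervalIntegral.norm_integral_le_of_norm_le
      (f := fun t => ⟪f' (x + t • (y - x)), y - x⟫ - ⟪f' x, y - x⟫)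
      (g := fun t => L * ‖y - x‖ ^ 2 * t) (μ := volume) (a := 0) (b := 1)
      (by norm_num) (by simpa only [Set.uIoc_of_le zero_le_one] using hb) (by apply Continuous.intervalIntegrable; continuity)
  have hval : ∫ t in (0:ℝ)..1, L * ‖y - x‖ ^ 2 * t = L * ‖y - x‖ ^ 2 / 2 := by
    rw [intervalIntegral.integral_const_mul, integral_id]
    ring
  rw [hval] at this
  calc |∫ t in (0:ℝ)..1, (⟪f' (x + t • (y - x)), y - x⟫ - ⟪f' x, y - x⟫)|
      ≤ |L * ‖y - x‖ ^ 2 / 2| := le_trans (by simpa only [Real.norm_eq_abs] using this) (le_abs_self _)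
    _ = L / 2 * ‖y - x‖ ^ 2 := by
        rw [abs_of_nonneg (by positivity)]; ring

/-- Lemma 5.1(b), first estimate: for Gaussian smoothing
`f_μ(x) = (2π)^{-n/2} ∫ f(x + μv) e^{-‖v‖²/2} dv` of a function with `L`-Lipschitz
gradient, `|f_μ(x) - f(x)| ≤ (μ²/2) L n`. -/
theorem gaussian_smoothing_function_close
    (n : ℕ) (f : EuclideanSpace ℝ (Fin n) → ℝ)
    (f' : EuclideanSpace ℝ (Fin n) → EuclideanSpace ℝ (Fin n))
    (hf' : ∀ x, HasGradientAt f (f' x) x)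
    (L : ℝ) (hL : 0 < L)
    (hLip : ∀ x y, ‖f' y - f' x‖ ≤ L * ‖y - x‖)
    (μ : ℝ) (hμ : 0 < μ) :
    ∀ x : EuclideanSpace ℝ (Fin n),
      |(2 * Real.pi) ^ (-(n : ℝ) / 2) *
          (∫ v : EuclideanSpace ℝ (Fin n), f (x + μ • v) * Real.exp (-‖v‖ ^ 2 / 2))
        - f x| ≤ μ ^ 2 / 2 * L * n := by
  intro x
  set c := f' x with hc
  set w : EuclideanSpace ℝ (Fin n) → ℝ := fun v => Real.exp (-‖v‖ ^ 2 / 2) with hw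
  have hwpos : ∀ v, 0 < w v := fun v => Real.exp_pos _
  have hfc : Continuous f := by
    have : Differentiable ℝ f := fun y => (hf' y).hasFDerivAt.differentiableAt
    exact this.continuous
  set r : EuclideanSpace ℝ (Fin n) → ℝ := fun v => f (x + μ • v) - f x - μ * ⟪c, v⟫ with hrdef
  have hrbound : ∀ v, |r v| ≤ L * μ ^ 2 / 2 * ‖v‖ ^ 2 := by
    intro v
    have := gs_taylor f f' hf' L hL hLip x (x + μ • v)
    rw [add_sub_cancel_left] at this
    rw [real_inner_smul_right] at this
    have hnorm : ‖μ • v‖ ^ 2 = μ ^ 2 * ‖v‖ ^ 2 := by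
      rw [norm_smul, Real.norm_eq_abs, mul_pow, sq_abs]
    rw [hnorm] at this
    calc |r v| ≤ L / 2 * (μ ^ 2 * ‖v‖ ^ 2) := this
      _ = L * μ ^ 2 / 2 * ‖v‖ ^ 2 := by ring
  -- integrabilities
  have hI1 : Integrable (fun v : EuclideanSpace ℝ (Fin n) => f x * w v) := gs_M1.const_mul _
  have hI2 : Integrable (fun v : EuclideanSpace ℝ (Fin n) => ⟪c, v⟫ * w v) := by
    apply Integrable.mono' ((gs_M1.const_mul ‖c‖).add (gs_M2.const_mul ‖c‖))
    · apply Continuous.aestronglyMeasurable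
      apply Continuous.mul
      · exact Continuous.inner continuous_const continuous_id
      · exact (by fun_prop : Continuous fun v : EuclideanSpace ℝ (Fin n) => Real.exp (-‖v‖ ^ 2 / 2))
    · apply Filter.Eventually.of_forall
      intro v
      have h1 : |⟪c, v⟫| ≤ ‖c‖ * ‖v‖ := abs_real_inner_le_norm _ _
      have h2 : ‖v‖ ≤ 1 + ‖v‖ ^ 2 := by nlinarith [sq_nonneg (‖v‖ - 1), norm_nonneg v]
      have h3 : (0:ℝ) < w v := hwpos v
      rw [Real.norm_eq_abs, abs_mul, abs_of_pos h3]
      have : |⟪c, v⟫| * w v ≤ (‖c‖ * (1 + ‖v‖ ^ 2)) * w v := by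
        apply mul_le_mul_of_nonneg_right _ h3.le
        calc |⟪c, v⟫| ≤ ‖c‖ * ‖v‖ := h1
          _ ≤ ‖c‖ * (1 + ‖v‖ ^ 2) := by
            apply mul_le_mul_of_nonneg_left h2 (norm_nonneg _)
      calc |⟪c, v⟫| * w v ≤ (‖c‖ * (1 + ‖v‖ ^ 2)) * w v := this
        _ = ‖c‖ * w v + ‖c‖ * (‖v‖ ^ 2 * w v) := by ring
  have hI3 : Integrable (fun v : EuclideanSpace ℝ (Fin n) => r v * w v) := by
    apply Integrable.mono' (gs_M2.const_mul (L * μ ^ 2 / 2))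
    · apply Continuous.aestronglyMeasurable
      apply Continuous.mul
      · apply Continuous.sub
        apply Continuous.sub
        · exact hfc.comp (continuous_const.add (continuous_id.const_smul μ))
        · exact continuous_const
        · exact Continuous.mul continuous_const (Continuous.inner continuous_const continuous_id)
      · exact (by fun_prop : Continuous fun v : EuclideanSpace ℝ (Fin n) => Real.exp (-‖v‖ ^ 2 / 2))
    · apply Filter.Eventually.of_forall
      intro v
      rw [Real.norm_eq_abs, abs_mul, abs_of_pos (hwpos v)]
      calc |r v| * w v ≤ (L * μ ^ 2 / 2 * ‖v‖ ^ 2) * w v :=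
            mul_le_mul_of_nonneg_right (hrbound v) (hwpos v).le
        _ = L * μ ^ 2 / 2 * (‖v‖ ^ 2 * w v) := by ring
  -- odd integral vanishes
  have hodd : ∫ v : EuclideanSpace ℝ (Fin n), ⟪c, v⟫ * w v = 0 := by
    have hneg := MeasureTheory.integral_neg_eq_self (fun v : EuclideanSpace ℝ (Fin n) => ⟪c, v⟫ * w v) volume
    have : (fun v : EuclideanSpace ℝ (Fin n) => ⟪c, -v⟫ * w (-v)) = fun v : EuclideanSpace ℝ (Fin n) => -(⟪c, v⟫ * w v) := by
      funext v
      simp only [hw, inner_neg_right, norm_neg, neg_mul]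
    rw [this, integral_neg] at hneg
    linarith
  -- split the integral
  have hsplit : ∫ v : EuclideanSpace ℝ (Fin n), f (x + μ • v) * w v
      = f x * (∫ v : EuclideanSpace ℝ (Fin n), w v) + ∫ v : EuclideanSpace ℝ (Fin n), r v * w v := by
    have hfun : (fun v : EuclideanSpace ℝ (Fin n) => f (x + μ • v) * w v)
        = fun v : EuclideanSpace ℝ (Fin n) => f x * w v + μ * (⟪c, v⟫ * w v) + r v * w v := by
      funext v
      simp only [hrdef]
      ring
    have hI2' : Integrable (fun v : EuclideanSpace ℝ (Fin n) => μ * (⟪c, v⟫ * w v)) :=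
      hI2.const_mul μ
    have hI12 : Integrable (fun v : EuclideanSpace ℝ (Fin n) =>
        f x * w v + μ * (⟪c, v⟫ * w v)) := hI1.add hI2'
    rw [hfun, integral_add hI12 hI3, integral_add hI1 hI2', integral_const_mul,
      integral_const_mul, hodd]
    ring
  -- bound the remainder integral
  have hrem : |∫ v : EuclideanSpace ℝ (Fin n), r v * w v| ≤ L * μ ^ 2 / 2 * (n * ∫ v : EuclideanSpace ℝ (Fin n), w v) := by
    calc |∫ v : EuclideanSpace ℝ (Fin n), r v * w v| ≤ ∫ v : EuclideanSpace ℝ (Fin n), |r v * w v| :=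
          by simpa only [Real.norm_eq_abs] using
            norm_integral_le_integral_norm (μ := volume)
              (fun v : EuclideanSpace ℝ (Fin n) => r v * w v)
      _ ≤ ∫ v : EuclideanSpace ℝ (Fin n), L * μ ^ 2 / 2 * (‖v‖ ^ 2 * w v) := by
          apply integral_mono hI3.abs (gs_M2.const_mul _)
          intro v
          dsimp only
          rw [abs_mul, abs_of_pos (hwpos v)]
          calc |r v| * w v ≤ (L * μ ^ 2 / 2 * ‖v‖ ^ 2) * w v :=
                mul_le_mul_of_nonneg_right (hrbound v) (hwpos v).le
            _ = L * μ ^ 2 / 2 * (‖v‖ ^ 2 * w v) := by ring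
      _ = L * μ ^ 2 / 2 * (n * ∫ v : EuclideanSpace ℝ (Fin n), w v) := by
          rw [integral_const_mul, gs_M3]
  -- final computation
  set A := (2 * Real.pi) ^ (-(n : ℝ) / 2) with hA
  set I0 := ∫ v : EuclideanSpace ℝ (Fin n), w v with hI0
  have hAI : A * I0 = 1 := by
    have hI0v : I0 = (2 * Real.pi) ^ ((n : ℝ) / 2) := by
      rw [hI0]; simp only [hw]; exact gs_M0
    rw [hI0v, hA, ← Real.rpow_add (by positivity), neg_div, neg_add_cancel, Real.rpow_zero]
  have hApos : 0 < A := by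
    rw [hA]; positivity
  rw [hsplit]
  have : A * (f x * I0 + ∫ v : EuclideanSpace ℝ (Fin n), r v * w v) - f x = A * ∫ v : EuclideanSpace ℝ (Fin n), r v * w v := by
    have : A * (f x * I0) = f x := by
      calc A * (f x * I0) = f x * (A * I0) := by ring
        _ = f x := by rw [hAI]; ring
    rw [mul_add, this]; ring
  rw [this, abs_mul, abs_of_pos hApos]
  calc A * |∫ v : EuclideanSpace ℝ (Fin n), r v * w v| ≤ A * (L * μ ^ 2 / 2 * (n * I0)) := by
        apply mul_le_mul_of_nonneg_left hrem hApos.le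
    _ = L * μ ^ 2 / 2 * n * (A * I0) := by ring
    _ = μ ^ 2 / 2 * L * n := by rw [hAI]; ring
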